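/- For all x in [-1,1] and all positive integers N, the sum f_N(x) = \sum_{n=0}^{N-1} (2n+1) P_n(x)^2 is at least N/2, where P_n denotes the Legendre polynomial of degree n. -/

import Mathlib

/-- The Legendre polynomials, defined via the three-term recurrence
`(n+2) P_{n+2}(x) = (2n+3) x P_{n+1}(x) - (n+1) P_n(x)`, `P_0 = 1`, `P_1 = x`. -/
noncomputable def legendreP : ℕ → ℝ → ℝ
  | 0, _ => 1
  | 1, x => x
  | (n + 2), x =>
      ((2 * (n : ℝ) + 3) * x * legendreP (n + 1) x - ((n : ℝ) + 1) * legendreP n x) /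
        ((n : ℝ) + 2)

lemma legendreP_zero (x : ℝ) : legendreP 0 x = 1 := rfl
lemma legendreP_one (x : ℝ) : legendreP 1 x = x := rfl
lemma legendreP_add_two (n : ℕ) (x : ℝ) : legendreP (n+2) x =
    ((2 * (n : ℝ) + 3) * x * legendreP (n + 1) x - ((n : ℝ) + 1) * legendreP n x) /
        ((n : ℝ) + 2) := rfl

noncomputable def legD : ℕ → ℝ → ℝ
  | 0, _ => 0
  | 1, _ => 1
  | (n + 2), x =>
      ((2 * (n : ℝ) + 3) * (legendreP (n + 1) x + x * legD (n + 1) x) - ((n : ℝ) + 1) * legD n x) /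
        ((n : ℝ) + 2)

noncomputable def legD2 : ℕ → ℝ → ℝ
  | 0, _ => 0
  | 1, _ => 0
  | (n + 2), x =>
      ((2 * (n : ℝ) + 3) * (2 * legD (n + 1) x + x * legD2 (n + 1) x) - ((n : ℝ) + 1) * legD2 n x) /
        ((n : ℝ) + 2)

lemma legendreP_hasDeriv : ∀ n : ℕ, ∀ x : ℝ, HasDerivAt (legendreP n) (legD n x) x := by
  have key : ∀ n : ℕ, (∀ x : ℝ, HasDerivAt (legendreP n) (legD n x) x) ∧
      (∀ x : ℝ, HasDerivAt (legendreP (n+1)) (legD (n+1) x) x) := by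
    intro n
    induction n with
    | zero =>
      constructor
      · intro x
        have : (legendreP 0) = fun _ : ℝ => (1:ℝ) := rfl
        rw [this]
        exact (hasDerivAt_const x (1:ℝ))
      · intro x
        have : (legendreP 1) = fun y : ℝ => y := rfl
        rw [this]
        exact hasDerivAt_id' x
    | succ n ih =>
      refine ⟨ih.2, ?_⟩
      intro x
      have h0 := ih.1 x
      have h1 := ih.2 x
      have hmul : HasDerivAt (fun y : ℝ => (2 * (n : ℝ) + 3) * y * legendreP (n+1) y)
          ((2 * (n : ℝ) + 3) * legendreP (n+1) x + (2 * (n : ℝ) + 3) * x * legD (n+1) x) x := by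
        have := (((hasDerivAt_id x).const_mul (2 * (n : ℝ) + 3)).mul h1)
        refine this.congr_deriv ?_
        simp only [id_eq]
        ring
      have hsub : HasDerivAt (fun y : ℝ => (2 * (n : ℝ) + 3) * y * legendreP (n+1) y
            - ((n : ℝ) + 1) * legendreP n y)
          ((2 * (n : ℝ) + 3) * legendreP (n+1) x + (2 * (n : ℝ) + 3) * x * legD (n+1) x
            - ((n : ℝ) + 1) * legD n x) x := hmul.sub (h0.const_mul _)
      have := hsub.div_const ((n : ℝ) + 2)
      have heq : (legendreP (n+2)) = fun y : ℝ =>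
          ((2 * (n : ℝ) + 3) * y * legendreP (n + 1) y - ((n : ℝ) + 1) * legendreP n y) /
          ((n : ℝ) + 2) := rfl
      rw [heq, legD]
      refine this.congr_deriv ?_
      ring
  exact fun n => (key n).1

lemma legD_hasDeriv : ∀ n : ℕ, ∀ x : ℝ, HasDerivAt (legD n) (legD2 n x) x := by
  have key : ∀ n : ℕ, (∀ x : ℝ, HasDerivAt (legD n) (legD2 n x) x) ∧
      (∀ x : ℝ, HasDerivAt (legD (n+1)) (legD2 (n+1) x) x) := by
    intro n
    induction n with
    | zero =>
      constructor
      · intro x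
        have : (legD 0) = fun _ : ℝ => (0:ℝ) := rfl
        rw [this]
        exact (hasDerivAt_const x (0:ℝ))
      · intro x
        have : (legD 1) = fun _ : ℝ => (1:ℝ) := rfl
        rw [this]
        exact (hasDerivAt_const x (1:ℝ))
    | succ n ih =>
      refine ⟨ih.2, ?_⟩
      intro x
      have h0 := ih.1 x
      have h1 := ih.2 x
      have hP1 := legendreP_hasDeriv (n+1) x
      have hin : HasDerivAt (fun y : ℝ => legendreP (n+1) y + y * legD (n+1) y)
          (legD (n+1) x + (legD (n+1) x + x * legD2 (n+1) x)) x := by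
        have := hP1.add ((hasDerivAt_id x).mul h1)
        refine this.congr_deriv ?_
        simp
      have hsub := ((hin.const_mul (2 * (n : ℝ) + 3)).sub (h0.const_mul ((n : ℝ) + 1))).div_const
        ((n : ℝ) + 2)
      have heq : (legD (n+2)) = fun y : ℝ =>
          ((2 * (n : ℝ) + 3) * (legendreP (n + 1) y + y * legD (n + 1) y) - ((n : ℝ) + 1) * legD n y) /
          ((n : ℝ) + 2) := rfl
      have hD2eq : legD2 (n+2) x =
          ((2 * (n : ℝ) + 3) * (2 * legD (n + 1) x + x * legD2 (n + 1) x) - ((n : ℝ) + 1) * legD2 n x) /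
          ((n : ℝ) + 2) := rfl
      rw [heq, hD2eq]
      refine hsub.congr_deriv ?_
      ring
  exact fun n => (key n).1

lemma legD_recA_recB : ∀ n : ℕ, ∀ x : ℝ,
    (legD (n+1) x = x * legD n x + ((n : ℝ) + 1) * legendreP n x) ∧
    (x * legD (n+1) x - ((n : ℝ) + 1) * legendreP (n+1) x = legD n x) := by
  intro n
  induction n with
  | zero =>
    intro x
    constructor
    · show (1:ℝ) = x * 0 + ((0:ℕ) + 1 : ℝ) * 1
      norm_num
    · show x * 1 - ((0:ℕ) + 1 : ℝ) * x = 0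
      norm_num
  | succ n ih =>
    intro x
    obtain ⟨hA, hB⟩ := ih x
    have hne : ((n : ℝ) + 2) ≠ 0 := by positivity
    have hD2m : ((n : ℝ) + 2) * legD (n+2) x =
        (2 * (n : ℝ) + 3) * (legendreP (n + 1) x + x * legD (n + 1) x) - ((n : ℝ) + 1) * legD n x := by
      have hD2 : legD (n+2) x =
          ((2 * (n : ℝ) + 3) * (legendreP (n + 1) x + x * legD (n + 1) x) - ((n : ℝ) + 1) * legD n x) /
          ((n : ℝ) + 2) := rfl
      rw [hD2]; field_simp
    have hP2m : ((n : ℝ) + 2) * legendreP (n+2) x =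
        (2 * (n : ℝ) + 3) * x * legendreP (n + 1) x - ((n : ℝ) + 1) * legendreP n x := by
      have hP2 : legendreP (n+2) x =
          ((2 * (n : ℝ) + 3) * x * legendreP (n + 1) x - ((n : ℝ) + 1) * legendreP n x) /
          ((n : ℝ) + 2) := rfl
      rw [hP2]; field_simp
    have hA' : legD (n+2) x = x * legD (n+1) x + ((n : ℝ) + 2) * legendreP (n+1) x := by
      apply mul_left_cancel₀ hne
      linear_combination hD2m + ((n:ℝ)+1) * hB
    constructor
    · push_cast
      linear_combination hA'
    · push_cast
      linear_combination x * hA' - hP2m - hA + x * hB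

lemma legE (n : ℕ) (x : ℝ) :
    (1 - x^2) * legD (n+1) x = ((n : ℝ) + 1) * (legendreP n x - x * legendreP (n+1) x) := by
  obtain ⟨hA, hB⟩ := legD_recA_recB n x
  linear_combination hA - x * hB

lemma legODE (n : ℕ) (x : ℝ) :
    (1 - x^2) * legD2 (n+1) x = 2*x*legD (n+1) x - ((n:ℝ)+1)*((n:ℝ)+2)*legendreP (n+1) x := by
  have hf : HasDerivAt (fun y : ℝ => (1 - y^2) * legD (n+1) y)
      ((-(2*x)) * legD (n+1) x + (1 - x^2) * legD2 (n+1) x) x := by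
    have h1 : HasDerivAt (fun y : ℝ => 1 - y^2) (-(2*x)) x := by
      have := (hasDerivAt_pow 2 x).const_sub (1:ℝ)
      simpa using this
    exact h1.mul (legD_hasDeriv (n+1) x)
  have hg : HasDerivAt (fun y : ℝ => ((n:ℝ)+1) * (legendreP n y - y * legendreP (n+1) y))
      (((n:ℝ)+1) * (legD n x - (legendreP (n+1) x + x * legD (n+1) x))) x := by
    have hid : HasDerivAt (fun y : ℝ => y * legendreP (n+1) y)
        (legendreP (n+1) x + x * legD (n+1) x) x := by
      have := (hasDerivAt_id x).mul (legendreP_hasDeriv (n+1) x)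
      refine this.congr_deriv ?_
      simp
    exact ((legendreP_hasDeriv n x).sub hid).const_mul _
  have hfg : (fun y : ℝ => (1 - y^2) * legD (n+1) y)
      = fun y : ℝ => ((n:ℝ)+1) * (legendreP n y - y * legendreP (n+1) y) :=
    funext (fun y => legE n y)
  have huniq : (-(2*x)) * legD (n+1) x + (1 - x^2) * legD2 (n+1) x
      = ((n:ℝ)+1) * (legD n x - (legendreP (n+1) x + x * legD (n+1) x)) :=
    (hfg ▸ hf).unique hg
  obtain ⟨hA, hB⟩ := legD_recA_recB n x
  linear_combination huniq - ((n:ℝ)+1) * hB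

lemma u_hasDeriv (n : ℕ) (x : ℝ) :
    HasDerivAt (fun y : ℝ => (legendreP (n+1) y)^2
        + (1 - y^2) * (legD (n+1) y)^2 / (((n:ℝ)+1)*((n:ℝ)+2)))
      (2*x*(legD (n+1) x)^2 / (((n:ℝ)+1)*((n:ℝ)+2))) x := by
  have hν : (((n:ℝ)+1)*((n:ℝ)+2)) ≠ 0 := by positivity
  have h1 : HasDerivAt (fun y : ℝ => (legendreP (n+1) y)^2)
      (2 * legendreP (n+1) x * legD (n+1) x) x := by
    have := (legendreP_hasDeriv (n+1) x).pow 2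
    refine this.congr_deriv ?_
    norm_num
  have hq : HasDerivAt (fun y : ℝ => (legD (n+1) y)^2)
      (2 * legD (n+1) x * legD2 (n+1) x) x := by
    have := (legD_hasDeriv (n+1) x).pow 2
    refine this.congr_deriv ?_
    norm_num
  have h2 : HasDerivAt (fun y : ℝ => (1 - y^2) * (legD (n+1) y)^2)
      ((-(2*x)) * (legD (n+1) x)^2 + (1 - x^2) * (2 * legD (n+1) x * legD2 (n+1) x)) x := by
    have h3 : HasDerivAt (fun y : ℝ => 1 - y^2) (-(2*x)) x := by
      have := (hasDerivAt_pow 2 x).const_sub (1:ℝ)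
      simpa using this
    exact h3.mul hq
  have := h1.add (h2.div_const (((n:ℝ)+1)*((n:ℝ)+2)))
  refine this.congr_deriv ?_
  have hODE := legODE n x
  field_simp
  linear_combination (legD (n+1) x) * hODE

lemma u_ge_u0 (n : ℕ) {x : ℝ} (hx : x ∈ Set.Icc (-1:ℝ) 1) :
    (legendreP (n+1) 0)^2 + (legD (n+1) 0)^2 / (((n:ℝ)+1)*((n:ℝ)+2)) ≤
    (legendreP (n+1) x)^2 + (1 - x^2) * (legD (n+1) x)^2 / (((n:ℝ)+1)*((n:ℝ)+2)) := by
  set u : ℝ → ℝ := fun y => (legendreP (n+1) y)^2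
      + (1 - y^2) * (legD (n+1) y)^2 / (((n:ℝ)+1)*((n:ℝ)+2)) with hu
  have hderiv : ∀ y : ℝ, HasDerivAt u (2*y*(legD (n+1) y)^2 / (((n:ℝ)+1)*((n:ℝ)+2))) y :=
    fun y => u_hasDeriv n y
  have hcont : Continuous u := by
    have : Differentiable ℝ u := fun y => (hderiv y).differentiableAt
    exact this.continuous
  have h0 : u 0 ≤ u x := by
    rcases le_total 0 x with h | h
    · have hmono : MonotoneOn u (Set.Icc (0:ℝ) 1) := by
        apply monotoneOn_of_deriv_nonneg (convex_Icc 0 1) hcont.continuousOn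
        · intro y hy
          exact (hderiv y).differentiableAt.differentiableWithinAt
        · intro y hy
          rw [(hderiv y).deriv]
          rw [interior_Icc] at hy
          have : (0:ℝ) ≤ 2*y := by linarith [hy.1]
          positivity
      exact hmono ⟨le_refl 0, zero_le_one⟩ ⟨h, hx.2⟩ h
    · have hanti : AntitoneOn u (Set.Icc (-1:ℝ) 0) := by
        apply antitoneOn_of_deriv_nonpos (convex_Icc (-1) 0) hcont.continuousOn
        · intro y hy
          exact (hderiv y).differentiableAt.differentiableWithinAt
        · intro y hy
          rw [(hderiv y).deriv]
          rw [interior_Icc] at hy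
          have h2y : 2*y ≤ 0 := by linarith [hy.2]
          have hsq : (0:ℝ) ≤ (legD (n+1) y)^2 := sq_nonneg _
          have hνpos : (0:ℝ) < ((n:ℝ)+1)*((n:ℝ)+2) := by positivity
          apply div_nonpos_of_nonpos_of_nonneg _ hνpos.le
          exact mul_nonpos_of_nonpos_of_nonneg h2y hsq
      exact hanti ⟨hx.1, h⟩ ⟨by norm_num, le_refl 0⟩ h
  simpa [hu] using h0

lemma legendreP_zero_val : ∀ n : ℕ,
    legendreP (2*n+1) 0 = 0 ∧
    legendreP (2*n+2) 0 = -((2*(n:ℝ)+1)/(2*(n:ℝ)+2)) * legendreP (2*n) 0 := by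
  have hstep : ∀ m : ℕ, legendreP (m+2) 0 = -(((m:ℝ)+1)/((m:ℝ)+2)) * legendreP m 0 := by
    intro m
    have : legendreP (m+2) 0 =
        ((2 * (m : ℝ) + 3) * 0 * legendreP (m + 1) 0 - ((m : ℝ) + 1) * legendreP m 0) /
        ((m : ℝ) + 2) := rfl
    rw [this]
    ring
  intro n
  induction n with
  | zero =>
    constructor
    · rfl
    · have := hstep 0
      push_cast at this ⊢
      convert this using 2 <;> norm_num
  | succ n ih =>
    constructor
    · have h := hstep (2*n+1)
      have h2 : legendreP (2*(n+1)+1) 0 = legendreP ((2*n+1)+2) 0 := by ring_nf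
      rw [h2, h, ih.1]
      ring
    · have h := hstep (2*n+2)
      have h2 : legendreP (2*(n+1)+2) 0 = legendreP ((2*n+2)+2) 0 := by ring_nf
      rw [h2, h]
      push_cast
      ring_nf

lemma odd_lb : ∀ k : ℕ, ((k:ℝ)+1)/(2*(k:ℝ)+1)^2 ≤ (legendreP (2*k) 0)^2 := by
  intro k
  induction k with
  | zero =>
    have : legendreP 0 (0:ℝ) = 1 := rfl
    rw [this]
    norm_num
  | succ k ih =>
    have hrec := (legendreP_zero_val k).2
    have h2 : (2*(k+1) : ℕ) = 2*k+2 := by ring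
    rw [h2, hrec]
    have hsq : (-((2*(k:ℝ)+1)/(2*(k:ℝ)+2)) * legendreP (2*k) 0)^2
        = ((2*(k:ℝ)+1)/(2*(k:ℝ)+2))^2 * (legendreP (2*k) 0)^2 := by ring
    rw [hsq]
    push_cast
    have key : ((k:ℝ)+1+1)/(2*((k:ℝ)+1)+1)^2 ≤
        ((2*(k:ℝ)+1)/(2*(k:ℝ)+2))^2 * (((k:ℝ)+1)/(2*(k:ℝ)+1)^2) := by
      rw [div_pow, div_mul_div_comm]
      rw [div_le_div_iff₀ (by positivity) (by positivity)]
      nlinarith [sq_nonneg ((k:ℝ)+1)]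
    have hmul : ((2*(k:ℝ)+1)/(2*(k:ℝ)+2))^2 * (((k:ℝ)+1)/(2*(k:ℝ)+1)^2) ≤
        ((2*(k:ℝ)+1)/(2*(k:ℝ)+2))^2 * (legendreP (2*k) 0)^2 :=
      mul_le_mul_of_nonneg_left ih (by positivity)
    linarith [key, hmul]

lemma even_lb : ∀ k : ℕ, 1 ≤ k → 1/(4*(k:ℝ)) ≤ (legendreP (2*k) 0)^2 := by
  intro k
  induction k with
  | zero => intro h; omega
  | succ k ih =>
    intro _
    rcases Nat.eq_zero_or_pos k with hk | hk
    · subst hk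
      have h0 : legendreP 0 (0:ℝ) = 1 := rfl
      have h1 : legendreP 2 (0:ℝ) = -(1/2) := by
        rw [show (2:ℕ) = 2*0+2 by norm_num, (legendreP_zero_val 0).2, h0]
        norm_num
      rw [show (2*1 : ℕ) = 2 by norm_num, h1]
      norm_num
    · have ih' := ih hk
      have hrec := (legendreP_zero_val k).2
      have h2 : (2*(k+1) : ℕ) = 2*k+2 := by ring
      rw [h2, hrec]
      have hsq : (-((2*(k:ℝ)+1)/(2*(k:ℝ)+2)) * legendreP (2*k) 0)^2
          = ((2*(k:ℝ)+1)/(2*(k:ℝ)+2))^2 * (legendreP (2*k) 0)^2 := by ring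
      rw [hsq]
      push_cast
      have hk1 : (1:ℝ) ≤ (k:ℝ) := by exact_mod_cast hk
      have key : 1/(4*((k:ℝ)+1)) ≤ ((2*(k:ℝ)+1)/(2*(k:ℝ)+2))^2 * (1/(4*(k:ℝ))) := by
        rw [div_pow, div_mul_div_comm]
        rw [div_le_div_iff₀ (by positivity) (by positivity)]
        nlinarith
      have hmul : ((2*(k:ℝ)+1)/(2*(k:ℝ)+2))^2 * (1/(4*(k:ℝ))) ≤
          ((2*(k:ℝ)+1)/(2*(k:ℝ)+2))^2 * (legendreP (2*k) 0)^2 :=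
        mul_le_mul_of_nonneg_left ih' (by positivity)
      linarith [key, hmul]

lemma u0_ge (n : ℕ) : 1/(2*((n:ℝ)+1)) ≤
    (legendreP (n+1) 0)^2 + (legD (n+1) 0)^2 / (((n:ℝ)+1)*((n:ℝ)+2)) := by
  have hD0 : legD (n+1) 0 = ((n:ℝ)+1) * legendreP n 0 := by
    have := (legD_recA_recB n 0).1
    simpa using this
  rcases Nat.even_or_odd n with ⟨k, hk⟩ | ⟨k, hk⟩
  · -- n = 2k even, n+1 odd: P_{n+1}(0)=0, use odd_lb on P_n(0)
    subst hk
    have hodd : legendreP (k+k+1) 0 = 0 := by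
      have := (legendreP_zero_val k).1
      rwa [show 2*k+1 = k+k+1 by ring] at this
    rw [hodd, hD0]
    have hlb := odd_lb k
    rw [show 2*k = k+k by ring] at hlb
    have hν : (0:ℝ) < ((k:ℝ)+(k:ℝ)+1)*((k:ℝ)+(k:ℝ)+2) := by positivity
    have hcast : ((k+k : ℕ) : ℝ) = (k:ℝ)+(k:ℝ) := by push_cast; ring
    rw [hcast]
    have expand : (0:ℝ)^2 + (((k:ℝ)+(k:ℝ)+1) * legendreP (k+k) 0)^2 / (((k:ℝ)+(k:ℝ)+1)*((k:ℝ)+(k:ℝ)+2))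
        = ((k:ℝ)+(k:ℝ)+1) * (legendreP (k+k) 0)^2 / ((k:ℝ)+(k:ℝ)+2) := by
      field_simp
      ring
    rw [expand, div_le_div_iff₀ (by positivity) (by positivity)]
    have hlb' : ((k:ℝ)+1) ≤ (legendreP (k+k) 0)^2 * (2*(k:ℝ)+1)^2 :=
      (div_le_iff₀ (by positivity)).mp hlb
    nlinarith [hlb']
  · -- n = 2k+1 odd, n+1 = 2k+2 even: P_n(0)=0
    subst hk
    have hodd : legendreP (2*k+1) 0 = 0 := (legendreP_zero_val k).1
    rw [hD0, hodd]
    have hlb := even_lb (k+1) (by omega)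
    rw [show 2*(k+1) = 2*k+1+1 by ring] at hlb
    push_cast at hlb ⊢
    have h1 : 1/(2*((2*(k:ℝ)+1)+1)) = 1/(4*((k:ℝ)+1)) := by ring_nf
    rw [h1]
    have hz : ((2*(k:ℝ)+1+1) * 0)^2 / ((2*(k:ℝ)+1+1)*(2*(k:ℝ)+1+2)) = 0 := by
      simp
    rw [hz]
    linarith [hlb]

lemma keyIdentity : ∀ (m : ℕ) (x : ℝ),
    (1 - x^2) * (∑ n ∈ Finset.range (m+1), (2*(n:ℝ)+1) * (legendreP n x)^2) =
    ((m:ℝ)+1)^2 * ((legendreP m x - x * legendreP (m+1) x)^2 + (1-x^2) * (legendreP (m+1) x)^2) := by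
  intro m
  induction m with
  | zero =>
    intro x
    have h0 : legendreP 0 x = 1 := rfl
    have h1 : legendreP 1 x = x := rfl
    simp [Finset.sum_range_one, h0, h1]
    ring
  | succ m ih =>
    intro x
    rw [Finset.sum_range_succ, mul_add, ih x]
    have hP2m : ((m:ℝ)+2) * legendreP (m+2) x =
        (2*(m:ℝ)+3) * x * legendreP (m+1) x - ((m:ℝ)+1) * legendreP m x := by
      have h : legendreP (m+2) x =
          ((2 * (m : ℝ) + 3) * x * legendreP (m + 1) x - ((m : ℝ) + 1) * legendreP m x) /
          ((m : ℝ) + 2) := rfl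
      rw [h]
      field_simp
    push_cast
    linear_combination (-(((m:ℝ)+2)) * legendreP (m+2) x + x * legendreP (m+1) x
      + ((m:ℝ)+1) * legendreP m x) * hP2m

lemma legendreP_one_val : ∀ n : ℕ, legendreP n 1 = 1 := by
  have key : ∀ n : ℕ, legendreP n 1 = 1 ∧ legendreP (n+1) 1 = 1 := by
    intro n
    induction n with
    | zero => exact ⟨rfl, rfl⟩
    | succ n ih =>
      refine ⟨ih.2, ?_⟩
      have h : legendreP (n+2) 1 =
          ((2 * (n : ℝ) + 3) * 1 * legendreP (n + 1) 1 - ((n : ℝ) + 1) * legendreP n 1) /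
          ((n : ℝ) + 2) := rfl
      rw [h, ih.1, ih.2]
      have hne : ((n:ℝ)+2) ≠ 0 := by positivity
      field_simp
      ring
  exact fun n => (key n).1

lemma legendreP_neg_one_val : ∀ n : ℕ, legendreP n (-1) = (-1)^n := by
  have key : ∀ n : ℕ, legendreP n (-1) = (-1)^n ∧ legendreP (n+1) (-1) = (-1)^(n+1) := by
    intro n
    induction n with
    | zero => constructor <;> simp [legendreP_zero, legendreP_one]
    | succ n ih =>
      refine ⟨ih.2, ?_⟩
      have h : legendreP (n+2) (-1) =
          ((2 * (n : ℝ) + 3) * (-1) * legendreP (n + 1) (-1) - ((n : ℝ) + 1) * legendreP n (-1)) /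
          ((n : ℝ) + 2) := rfl
      rw [h, ih.1, ih.2]
      have hne : ((n:ℝ)+2) ≠ 0 := by positivity
      rw [pow_succ, pow_succ]
      field_simp
      ring
  exact fun n => (key n).1

lemma sum_odds (N : ℕ) : ∑ n ∈ Finset.range N, (2*(n:ℝ)+1) = (N:ℝ)^2 := by
  induction N with
  | zero => simp
  | succ N ih =>
    rw [Finset.sum_range_succ, ih]
    push_cast
    ring

theorem christoffel_lower_bound (N : ℕ) (hN : 1 ≤ N) (x : ℝ) (hx : x ∈ Set.Icc (-1 : ℝ) 1) :
    (N : ℝ) / 2 ≤ ∑ n ∈ Finset.range N, (2 * (n : ℝ) + 1) * (legendreP n x) ^ 2 := by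
  obtain ⟨n, rfl⟩ : ∃ n, N = n + 1 := ⟨N - 1, by omega⟩
  obtain ⟨hx1, hx2⟩ := hx
  by_cases hsq : x^2 = 1
  · -- boundary case x = ±1
    have hx01 : (x - 1) * (x + 1) = 0 := by linear_combination hsq
    have hval : ∀ k : ℕ, (legendreP k x)^2 = 1 := by
      intro k
      rcases mul_eq_zero.mp hx01 with h | h
      · have hx' : x = 1 := by linarith
        rw [hx', legendreP_one_val]
        norm_num
      · have hx' : x = -1 := by linarith
        rw [hx', legendreP_neg_one_val, ← pow_mul, mul_comm k 2, pow_mul]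
        norm_num
    have hsum : ∑ k ∈ Finset.range (n+1), (2*(k:ℝ)+1) * (legendreP k x)^2 =
        ∑ k ∈ Finset.range (n+1), (2*(k:ℝ)+1) :=
      Finset.sum_congr rfl (fun k _ => by rw [hval k, mul_one])
    rw [hsum, sum_odds]
    have h1 : (1:ℝ) ≤ ((n+1 : ℕ) : ℝ) := by exact_mod_cast hN
    nlinarith [h1]
  · have ht : 0 < 1 - x^2 := by
      have : x^2 ≤ 1 := by nlinarith
      rcases lt_or_eq_of_le this with h | h
      · linarith
      · exact absurd h hsq
    have hid := keyIdentity n x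
    have hE := legE n x
    set P := legendreP (n+1) x with hP
    set D := legD (n+1) x with hD
    have hKt : (1 - x^2) * (∑ k ∈ Finset.range (n+1), (2*(k:ℝ)+1) * (legendreP k x)^2) =
        (1 - x^2) * ((1 - x^2) * D^2 + ((n:ℝ)+1)^2 * P^2) := by
      linear_combination hid - ((1-x^2) * D + ((n:ℝ)+1) * (legendreP n x - x * P)) * hE
    have hK : (∑ k ∈ Finset.range (n+1), (2*(k:ℝ)+1) * (legendreP k x)^2) =
        (1 - x^2) * D^2 + ((n:ℝ)+1)^2 * P^2 :=
      mul_left_cancel₀ ht.ne' hKt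
    have hu := u_ge_u0 n ⟨hx1, hx2⟩
    have hu0 := u0_ge n
    set ν := ((n:ℝ)+1) * ((n:ℝ)+2) with hν
    have hνpos : (0:ℝ) < ν := by positivity
    have hq : (0:ℝ) ≤ (1 - x^2) * D^2 := by positivity
    have step3 : ((n:ℝ)+1)^2 * (P^2 + (1 - x^2) * D^2 / ν) ≤
        (1 - x^2) * D^2 + ((n:ℝ)+1)^2 * P^2 := by
      have heq : ((n:ℝ)+1)^2 * (P^2 + (1 - x^2) * D^2 / ν) =
          ((n:ℝ)+1)^2 * P^2 + ((1 - x^2) * D^2) * (((n:ℝ)+1)/((n:ℝ)+2)) := by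
        rw [hν]; field_simp
      rw [heq]
      have hle : ((1 - x^2) * D^2) * (((n:ℝ)+1)/((n:ℝ)+2)) ≤ (1 - x^2) * D^2 := by
        apply mul_le_of_le_one_right hq
        rw [div_le_one (by positivity)]
        linarith
      linarith
    have step12 : ((n:ℝ)+1)/2 ≤ ((n:ℝ)+1)^2 * (P^2 + (1 - x^2) * D^2 / ν) := by
      have hchain : 1/(2*((n:ℝ)+1)) ≤ P^2 + (1 - x^2) * D^2 / ν := le_trans hu0 hu
      have h1 : ((n:ℝ)+1)^2 * (1/(2*((n:ℝ)+1))) = ((n:ℝ)+1)/2 := by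
        field_simp
      calc ((n:ℝ)+1)/2 = ((n:ℝ)+1)^2 * (1/(2*((n:ℝ)+1))) := h1.symm
        _ ≤ ((n:ℝ)+1)^2 * (P^2 + (1 - x^2) * D^2 / ν) :=
            mul_le_mul_of_nonneg_left hchain (by positivity)
    rw [hK]
    push_cast
    linarith [step12, step3]
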